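/- Let E ∈ ℝ^{n×n}, F ∈ ℝ^{m×n}, G ∈ ℝ^{m×m} symmetric, q ∈ ℝⁿ, r ∈ ℝᵐ, and let û ∈ ℝⁿ, p̂ ∈ ℝᵐ. Fix positive weights α₁, α₂, α₃, β₁, β₂. Set Q = q − Eû − Fᵀp̂, R = r − Fû − Gp̂, S₁ = J_S^m Φ_G D_{S,m}⁻¹. Define K₁^R = [α₁⁻¹(ûᵀ⊗Iₙ)Σ_E, α₂⁻¹(Iₙ⊗p̂ᵀ)Σ_F, 0_{n×m(m+1)/2}], K₂^R = [0_{m×n²}, α₂⁻¹(ûᵀ⊗I_m)Σ_F, α₃⁻¹(p̂ᵀ⊗I_m)S₁], Ĩ₁ = [−β₁⁻¹Iₙ, 0_{n×m}], Ĩ₂ = [0_{m×n}, −β₂⁻¹I_m], and M = [[K₁^R, Ĩ₁],[K₂^R, Ĩ₂]]. Then MMᵀ is invertible, and the sparsity-preserving structured backward error inf{ ζ^{σ₁}(ΔE⊙Θ_E, ΔF⊙Θ_F, ΔG⊙Θ_G, Δq, Δr) : ΔE ∈ ℝ^{n×n}, ΔF ∈ ℝ^{m×n}, ΔG ∈ ℝ^{m×m}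 symmetric, Δq ∈ ℝⁿ, Δr ∈ ℝᵐ, (E+ΔE⊙Θ_E)û + (F+ΔF⊙Θ_F)ᵀp̂ = q+Δq and (F+ΔF⊙Θ_F)û + (G+ΔG⊙Θ_G)p̂ = r+Δr } is attained and equals ‖Mᵀ(MMᵀ)⁻¹[Q; R]‖₂. -/

import Mathlib

open Matrix

noncomputable section

namespace GSPPBE

/-- Entrywise real part of a complex matrix. -/
def reM {I J : Type*} (A : Matrix I J ℂ) : Matrix I J ℝ := A.map Complex.re

/-- Entrywise imaginary part of a complex matrix. -/
def imM {I J : Type*} (A : Matrix I J ℂ) : Matrix I J ℝ := A.map Complex.im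

/-- Entrywise real part of a complex vector. -/
def reV {I : Type*} (v : I → ℂ) : I → ℝ := fun i => (v i).re

/-- Entrywise imaginary part of a complex vector. -/
def imV {I : Type*} (v : I → ℂ) : I → ℝ := fun i => (v i).im

/-- Frobenius norm of a matrix. -/
def frob {I J α : Type*} [Fintype I] [Fintype J] [SeminormedAddGroup α]
    (A : Matrix I J α) : ℝ :=
  Real.sqrt (∑ i, ∑ j, ‖A i j‖ ^ 2)

/-- Euclidean norm of a (finitely indexed) vector. -/
def eunorm {I α : Type*} [Fintype I] [SeminormedAddGroup α] (v : I → α) : ℝ :=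
  Real.sqrt (∑ i, ‖v i‖ ^ 2)

/-- Column-major vectorization: `vecM A (j, i) = A i j`. -/
def vecM {I J α : Type*} (A : Matrix I J α) : J × I → α := fun p => A p.2 p.1

/-- Index type for the lower triangle including the diagonal (positions of `vec_S`);
it has `m(m+1)/2` elements. -/
abbrev SymIdx (m : ℕ) := {p : Fin m × Fin m // p.2 ≤ p.1}

/-- Index type for the strictly lower triangle (positions of `vec_SK`);
it has `m(m-1)/2` elements. -/
abbrev SkewIdx (m : ℕ) := {p : Fin m × Fin m // p.2 < p.1}

/-- `vec_S` of a (symmetric) matrix: its lower-triangular entries `Z i j`, `j ≤ i`. -/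
def vecS {m : ℕ} {α : Type*} (Z : Matrix (Fin m) (Fin m) α) : SymIdx m → α :=
  fun p => Z p.1.1 p.1.2

/-- `vec_SK` of a (skew-symmetric) matrix: its strictly lower-triangular entries `Z i j`, `j < i`. -/
def vecSK {m : ℕ} {α : Type*} (Z : Matrix (Fin m) (Fin m) α) : SkewIdx m → α :=
  fun p => Z p.1.1 p.1.2

/-- `J_S^m`: its column at position `(i,j)`, `j ≤ i`, is `vec(eᵢeⱼᵀ + eⱼeᵢᵀ)` for `i > j` and
`vec(eⱼeⱼᵀ)` for `i = j`.  Rows are vec positions `(column, row)`. -/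
def JS (m : ℕ) : Matrix (Fin m × Fin m) (SymIdx m) ℝ :=
  Matrix.of fun cr p =>
    (if cr.2 = p.1.1 ∧ cr.1 = p.1.2 then (1 : ℝ) else 0) +
    (if p.1.1 ≠ p.1.2 ∧ cr.2 = p.1.2 ∧ cr.1 = p.1.1 then 1 else 0)

/-- `J_SK^m`: its column at position `(i,j)`, `j < i`, is `vec(eᵢeⱼᵀ − eⱼeᵢᵀ)`. -/
def JSK (m : ℕ) : Matrix (Fin m × Fin m) (SkewIdx m) ℝ :=
  Matrix.of fun cr p =>
    (if cr.2 = p.1.1 ∧ cr.1 = p.1.2 then (1 : ℝ) else 0) -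
    (if cr.2 = p.1.2 ∧ cr.1 = p.1.1 then 1 else 0)

open Classical in
/-- Sign pattern `Θ_X` of a matrix, with values in the same ring. -/
def theta {I J α : Type*} [Zero α] [One α] (X : Matrix I J α) : Matrix I J α :=
  Matrix.of fun i j => if X i j = 0 then 0 else 1

open Classical in
/-- Real-valued sign pattern `Θ_X` of a matrix. -/
def thetaR {I J α : Type*} [Zero α] (X : Matrix I J α) : Matrix I J ℝ :=
  Matrix.of fun i j => if X i j = 0 then 0 else 1

/-- `Φ_X = diag(vec_S(Θ_X))`. -/
def Phi {m : ℕ} {α : Type*} [Zero α] (X : Matrix (Fin m) (Fin m) α) :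
    Matrix (SymIdx m) (SymIdx m) ℝ :=
  Matrix.diagonal (vecS (thetaR X))

/-- `Ψ_X`: diagonal matrix listing the strictly lower-triangular entries of `Θ_X`
in `vec_SK` ordering. -/
def Psi {m : ℕ} {α : Type*} [Zero α] (X : Matrix (Fin m) (Fin m) α) :
    Matrix (SkewIdx m) (SkewIdx m) ℝ :=
  Matrix.diagonal (vecSK (thetaR X))

/-- `Σ_X = diag(vec(Θ_X))`. -/
def Sig {I J α : Type*} [DecidableEq I] [DecidableEq J] [Zero α]
    (X : Matrix I J α) : Matrix (J × I) (J × I) ℝ :=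
  Matrix.diagonal (vecM (thetaR X))

/-- `D_{S,m}`: diagonal entry `1` at the positions of diagonal entries `(j,j)`, `√2` elsewhere. -/
def DS (m : ℕ) : Matrix (SymIdx m) (SymIdx m) ℝ :=
  Matrix.diagonal fun p => if p.1.1 = p.1.2 then 1 else Real.sqrt 2

/-- `D_{SK,m} = √2·I`. -/
def DSK (m : ℕ) : Matrix (SkewIdx m) (SkewIdx m) ℝ :=
  Matrix.diagonal fun _ => Real.sqrt 2

/-- `uᵀ ⊗ I_b`, viewed as a matrix acting on column-major vectorizations of `b×a` matrices. -/
def rowKronId {a b : ℕ} (u : Fin a → ℝ) : Matrix (Fin b) (Fin a × Fin b) ℝ :=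
  Matrix.of fun r p => u p.1 * (if r = p.2 then 1 else 0)

/-- `I_a ⊗ vᵀ`, viewed as a matrix acting on column-major vectorizations of `b×a` matrices. -/
def idKronRow {a b : ℕ} (v : Fin b → ℝ) : Matrix (Fin a) (Fin a × Fin b) ℝ :=
  Matrix.of fun r p => (if r = p.1 then 1 else 0) * v p.2

/-- The weighted norm `ζ^{σ₁}(A,B,C,q,r)`. -/
def zeta1 {n m : ℕ} {α : Type*} [SeminormedAddGroup α]
    (α₁ α₂ α₃ β₁ β₂ : ℝ)
    (A : Matrix (Fin n) (Fin n) α) (B : Matrix (Fin m) (Fin n) α)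
    (C : Matrix (Fin m) (Fin m) α) (q : Fin n → α) (r : Fin m → α) : ℝ :=
  Real.sqrt (α₁ ^ 2 * frob A ^ 2 + α₂ ^ 2 * frob B ^ 2 + α₃ ^ 2 * frob C ^ 2 +
    β₁ ^ 2 * eunorm q ^ 2 + β₂ ^ 2 * eunorm r ^ 2)

/-- The weighted norm `ζ^{σ₂}(A,B,H,C,q,r)`. -/
def zeta2 {n m : ℕ} {α : Type*} [SeminormedAddGroup α]
    (α₁ α₂ α₃ α₄ β₁ β₂ : ℝ)
    (A : Matrix (Fin n) (Fin n) α) (B : Matrix (Fin m) (Fin n) α)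
    (H : Matrix (Fin m) (Fin n) α) (C : Matrix (Fin m) (Fin m) α)
    (q : Fin n → α) (r : Fin m → α) : ℝ :=
  Real.sqrt (α₁ ^ 2 * frob A ^ 2 + α₂ ^ 2 * frob B ^ 2 + α₃ ^ 2 * frob H ^ 2 +
    α₄ ^ 2 * frob C ^ 2 + β₁ ^ 2 * eunorm q ^ 2 + β₂ ^ 2 * eunorm r ^ 2)
-- helpers, part 1
section Helpers

/-- Diagonal entries of `DS`. -/
def dsv {m : ℕ} (p : SymIdx m) : ℝ := if p.1.1 = p.1.2 then 1 else Real.sqrt 2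

lemma dsv_pos {m : ℕ} (p : SymIdx m) : 0 < dsv p := by
  unfold dsv; split
  · exact one_pos
  · positivity

lemma dsv_ne_zero {m : ℕ} (p : SymIdx m) : dsv p ≠ 0 := (dsv_pos p).ne'

lemma DS_eq (m : ℕ) : DS m = Matrix.diagonal dsv := rfl

lemma DS_inv (m : ℕ) : (DS m)⁻¹ = Matrix.diagonal (fun p => (dsv p)⁻¹) := by
  apply Matrix.inv_eq_right_inv
  rw [DS_eq, Matrix.diagonal_mul_diagonal]
  convert Matrix.diagonal_one using 2
  ext p
  exact mul_inv_cancel₀ (dsv_ne_zero p)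

lemma eunorm_eq_real {I : Type*} [Fintype I] (v : I → ℝ) :
    eunorm v = Real.sqrt (∑ i, v i ^ 2) := by
  unfold eunorm
  congr 1
  simp [Real.norm_eq_abs, sq_abs]

lemma frob_sq_real {I J : Type*} [Fintype I] [Fintype J] (A : Matrix I J ℝ) :
    frob A ^ 2 = ∑ i, ∑ j, A i j ^ 2 := by
  unfold frob
  rw [Real.sq_sqrt (by positivity)]
  simp [Real.norm_eq_abs, sq_abs]

lemma eunorm_sq_real {I : Type*} [Fintype I] (v : I → ℝ) :
    eunorm v ^ 2 = ∑ i, v i ^ 2 := by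
  rw [eunorm_eq_real, Real.sq_sqrt (by positivity)]

end Helpers
section Helpers2

lemma rowKronId_mulVec {a b : ℕ} (u : Fin a → ℝ) (A : Matrix (Fin b) (Fin a) ℝ) :
    rowKronId u *ᵥ vecM A = A *ᵥ u := by
  funext i
  simp only [Matrix.mulVec, dotProduct, rowKronId, vecM, Matrix.of_apply,
    Fintype.sum_prod_type]
  refine Finset.sum_congr rfl fun j _ => ?_
  simp [mul_ite, mul_zero, mul_one, ite_mul, zero_mul, Finset.sum_ite_eq, mul_comm]

lemma idKronRow_mulVec {a b : ℕ} (v : Fin b → ℝ) (B : Matrix (Fin b) (Fin a) ℝ) :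
    idKronRow v *ᵥ vecM B = Bᵀ *ᵥ v := by
  funext i
  simp only [Matrix.mulVec, dotProduct, idKronRow, vecM, Matrix.of_apply,
    Fintype.sum_prod_type, Matrix.transpose_apply]
  simp [Finset.sum_ite_eq, mul_comm]

/-- Support predicate: `A` vanishes wherever `X` vanishes. -/
def Supp {I J : Type*} (X A : Matrix I J ℝ) : Prop := ∀ i j, X i j = 0 → A i j = 0

lemma hadamard_theta_supp {I J : Type*} (X A : Matrix I J ℝ) :
    Supp X (A.hadamard (theta X)) := by
  intro i j h
  simp [Matrix.hadamard_apply, theta, h]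

lemma hadamard_theta_of_supp {I J : Type*} {X A : Matrix I J ℝ} (h : Supp X A) :
    A.hadamard (theta X) = A := by
  ext i j
  by_cases hx : X i j = 0
  · simp [Matrix.hadamard_apply, theta, hx, h i j hx]
  · simp [Matrix.hadamard_apply, theta, hx]

lemma sig_mulVec_of_supp {I J : Type*} [Fintype I] [Fintype J] [DecidableEq I] [DecidableEq J]
    {X A : Matrix I J ℝ} (h : Supp X A) : Sig X *ᵥ vecM A = vecM A := by
  funext p
  rw [Sig, Matrix.mulVec_diagonal]
  by_cases hx : X p.2 p.1 = 0
  · simp [vecM, h _ _ hx]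
  · simp [vecM, thetaR, hx]

lemma phi_mulVec_of_supp {m : ℕ} {X Z : Matrix (Fin m) (Fin m) ℝ} (h : Supp X Z) :
    Phi X *ᵥ vecS Z = vecS Z := by
  funext p
  rw [Phi, Matrix.mulVec_diagonal]
  by_cases hx : X p.1.1 p.1.2 = 0
  · simp [vecS, h _ _ hx]
  · simp [vecS, thetaR, hx]

lemma DS_inv_mulVec {m : ℕ} (v : SymIdx m → ℝ) :
    (DS m)⁻¹ *ᵥ (fun p => dsv p * v p) = v := by
  funext p
  rw [DS_inv, Matrix.mulVec_diagonal, ← mul_assoc, inv_mul_cancel₀ (dsv_ne_zero p), one_mul]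

lemma JS_mulVec_vecS {m : ℕ} {Z : Matrix (Fin m) (Fin m) ℝ} (hZ : Z.IsSymm) :
    JS m *ᵥ vecS Z = vecM Z := by
  funext c
  obtain ⟨j, i⟩ := c
  simp only [Matrix.mulVec, dotProduct, JS, vecS, vecM, Matrix.of_apply, add_mul]
  rw [Finset.sum_add_distrib]
  have hsym : ∀ a b : Fin m, Z a b = Z b a := fun a b => by
    conv_lhs => rw [← hZ]
    rfl
  by_cases h : j ≤ i
  · have h1 : (∑ p : SymIdx m, (if i = p.1.1 ∧ j = p.1.2 then (1:ℝ) else 0) * Z p.1.1 p.1.2)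
        = Z i j := by
      rw [Fintype.sum_eq_single (⟨(i, j), h⟩ : SymIdx m)]
      · simp
      · intro p hp
        rw [if_neg, zero_mul]
        rintro ⟨h1, h2⟩
        exact hp (by apply Subtype.ext; exact Prod.ext h1.symm h2.symm)
    have h2 : (∑ p : SymIdx m, (if p.1.1 ≠ p.1.2 ∧ i = p.1.2 ∧ j = p.1.1 then (1:ℝ) else 0)
        * Z p.1.1 p.1.2) = 0 := by
      apply Finset.sum_eq_zero
      intro p _
      rw [if_neg, zero_mul]
      rintro ⟨hne, h1, h2⟩
      exact hne (le_antisymm (by rw [← h2, ← h1]; exact h) p.2)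
    rw [h1, h2, add_zero]
  · push_neg at h
    have h1 : (∑ p : SymIdx m, (if i = p.1.1 ∧ j = p.1.2 then (1:ℝ) else 0) * Z p.1.1 p.1.2)
        = 0 := by
      apply Finset.sum_eq_zero
      intro p _
      rw [if_neg, zero_mul]
      rintro ⟨h1, h2⟩
      exact absurd (h1 ▸ h2 ▸ p.2) (not_le.mpr h)
    have h2 : (∑ p : SymIdx m, (if p.1.1 ≠ p.1.2 ∧ i = p.1.2 ∧ j = p.1.1 then (1:ℝ) else 0)
        * Z p.1.1 p.1.2) = Z j i := by
      rw [Fintype.sum_eq_single (⟨(j, i), h.le⟩ : SymIdx m)]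
      · simp [h.ne']
      · intro p hp
        rw [if_neg, zero_mul]
        rintro ⟨hne, h1, h2⟩
        exact hp (by apply Subtype.ext; exact Prod.ext h2.symm h1.symm)
    rw [h1, h2, zero_add, hsym]

end Helpers2
section Helpers3

lemma sum_symIdx_eq {m : ℕ} {Z : Matrix (Fin m) (Fin m) ℝ} (hZ : Z.IsSymm) :
    ∑ p : SymIdx m, (dsv p * Z p.1.1 p.1.2) ^ 2 = ∑ i, ∑ j, Z i j ^ 2 := by
  classical
  have hsym : ∀ a b : Fin m, Z a b = Z b a := fun a b => by
    conv_lhs => rw [← hZ]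
    rfl
  have step1 : ∑ p : SymIdx m, (dsv p * Z p.1.1 p.1.2) ^ 2 =
      ∑ p ∈ Finset.univ.filter (fun p : Fin m × Fin m => p.2 ≤ p.1),
        (if p.1 = p.2 then 1 else 2) * Z p.1 p.2 ^ 2 := by
    rw [Finset.sum_subtype (p := fun p : Fin m × Fin m => p.2 ≤ p.1)
      (Finset.univ.filter (fun p : Fin m × Fin m => p.2 ≤ p.1))
      (fun x => by simp) (fun p : Fin m × Fin m => (if p.1 = p.2 then 1 else 2) * Z p.1 p.2 ^ 2)]
    refine Finset.sum_congr rfl fun p _ => ?_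
    rw [mul_pow, dsv]
    by_cases h : p.1.1 = p.1.2
    · simp [h]
    · rw [if_neg h, if_neg h, Real.sq_sqrt (by norm_num)]
  have step2 : ∀ p : Fin m × Fin m, (if p.1 = p.2 then (1:ℝ) else 2) * Z p.1 p.2 ^ 2 =
      Z p.1 p.2 ^ 2 + (if ¬ p.1 = p.2 then Z p.1 p.2 ^ 2 else 0) := by
    intro p; by_cases h : p.1 = p.2 <;> simp [h] <;> ring
  have step3 : ∑ p ∈ Finset.univ.filter (fun p : Fin m × Fin m => p.2 ≤ p.1),
        (if ¬ p.1 = p.2 then Z p.1 p.2 ^ 2 else 0)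
      = ∑ p ∈ Finset.univ.filter (fun p : Fin m × Fin m => ¬ p.2 ≤ p.1), Z p.1 p.2 ^ 2 := by
    rw [Finset.sum_ite, Finset.sum_const_zero, add_zero, Finset.filter_filter]
    refine Finset.sum_nbij' (fun p => Prod.swap p) (fun p => Prod.swap p) ?_ ?_ ?_ ?_ ?_
    · intro p hp
      simp only [Finset.mem_filter, Finset.mem_univ, true_and] at hp ⊢
      exact fun hle => hp.2 (le_antisymm (hp.1) hle).symm
    · intro p hp
      simp only [Finset.mem_filter, Finset.mem_univ, true_and] at hp ⊢
      push_neg at hp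
      exact ⟨hp.le, hp.ne'⟩
    · intro p _; simp
    · intro p _; simp
    · intro p _; exact hsym p.1 p.2 ▸ rfl
  rw [step1, Finset.sum_congr rfl (fun p _ => step2 p), Finset.sum_add_distrib, step3,
    Finset.sum_filter_add_sum_filter_not, ← Fintype.sum_prod_type']

lemma min_norm {ι κ : Type*} [Fintype ι] [Fintype κ] [DecidableEq ι] [DecidableEq κ]
    (M : Matrix ι κ ℝ) (hM : IsUnit (M * Mᵀ)) (w : ι → ℝ) :
    M *ᵥ ((Mᵀ * (M * Mᵀ)⁻¹) *ᵥ w) = w ∧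
    ∀ x : κ → ℝ, M *ᵥ x = w → eunorm ((Mᵀ * (M * Mᵀ)⁻¹) *ᵥ w) ≤ eunorm x := by
  have hinv : (M * Mᵀ) * (M * Mᵀ)⁻¹ = 1 :=
    Matrix.mul_nonsing_inv _ ((Matrix.isUnit_iff_isUnit_det _).mp hM)
  have hsol : M *ᵥ ((Mᵀ * (M * Mᵀ)⁻¹) *ᵥ w) = w := by
    rw [Matrix.mulVec_mulVec, ← Matrix.mul_assoc, hinv, Matrix.one_mulVec]
  refine ⟨hsol, fun x hx => ?_⟩
  set xs := (Mᵀ * (M * Mᵀ)⁻¹) *ᵥ w with hxs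
  set d := x - xs with hd
  have hMd : M *ᵥ d = 0 := by
    rw [hd, Matrix.mulVec_sub, hx, hsol, sub_self]
  have horth : xs ⬝ᵥ d = 0 := by
    have h1 : xs = ((M * Mᵀ)⁻¹ *ᵥ w) ᵥ* M := by
      rw [hxs, ← Matrix.mulVec_mulVec, Matrix.mulVec_transpose]
    rw [h1, ← Matrix.dotProduct_mulVec, hMd, dotProduct_zero]
  have hxd : x = xs + d := by rw [hd]; ring
  rw [eunorm_eq_real, eunorm_eq_real]
  apply Real.sqrt_le_sqrt
  have expand : ∑ i, x i ^ 2 = ∑ i, xs i ^ 2 + 2 * (xs ⬝ᵥ d) + ∑ i, d i ^ 2 := by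
    rw [dotProduct, Finset.mul_sum, ← Finset.sum_add_distrib, ← Finset.sum_add_distrib]
    refine Finset.sum_congr rfl fun i _ => ?_
    rw [hxd]; simp only [Pi.add_apply]; ring
  rw [expand, horth]
  have : (0:ℝ) ≤ ∑ i, d i ^ 2 := by positivity
  linarith

end Helpers3
section Main

variable {n m : ℕ}

/-- Pack a perturbation tuple into one long vector. -/
def pack (α₁ α₂ α₃ β₁ β₂ : ℝ) (A : Matrix (Fin n) (Fin n) ℝ) (B : Matrix (Fin m) (Fin n) ℝ)
    (Z : Matrix (Fin m) (Fin m) ℝ) (dq : Fin n → ℝ) (dr : Fin m → ℝ) :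
    ((Fin n × Fin n) ⊕ ((Fin n × Fin m) ⊕ SymIdx m)) ⊕ (Fin n ⊕ Fin m) → ℝ :=
  Sum.elim (Sum.elim (α₁ • vecM A)
      (Sum.elim (α₂ • vecM B) (α₃ • fun p => dsv p * vecS Z p)))
    (Sum.elim (β₁ • dq) (β₂ • dr))

lemma M_mulVec_pack (E : Matrix (Fin n) (Fin n) ℝ) (F : Matrix (Fin m) (Fin n) ℝ)
    (G : Matrix (Fin m) (Fin m) ℝ) (uh : Fin n → ℝ) (ph : Fin m → ℝ)
    (α₁ α₂ α₃ β₁ β₂ : ℝ)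
    (hα₁ : α₁ ≠ 0) (hα₂ : α₂ ≠ 0) (hα₃ : α₃ ≠ 0) (hβ₁ : β₁ ≠ 0) (hβ₂ : β₂ ≠ 0)
    (A : Matrix (Fin n) (Fin n) ℝ) (B : Matrix (Fin m) (Fin n) ℝ)
    (Z : Matrix (Fin m) (Fin m) ℝ) (dq : Fin n → ℝ) (dr : Fin m → ℝ)
    (hA : Supp E A) (hB : Supp F B) (hZ : Supp G Z) (hZs : Z.IsSymm) :
    (Matrix.fromBlocks
      (Matrix.fromCols (α₁⁻¹ • (rowKronId (b := n) uh * Sig E))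
        (Matrix.fromCols (α₂⁻¹ • (idKronRow (a := n) ph * Sig F)) 0))
      (Matrix.fromCols ((-(β₁⁻¹)) • (1 : Matrix (Fin n) (Fin n) ℝ)) 0)
      (Matrix.fromCols 0
        (Matrix.fromCols (α₂⁻¹ • (rowKronId (b := m) uh * Sig F))
          (α₃⁻¹ • (rowKronId (b := m) ph * (JS m * Phi G * (DS m)⁻¹)))))
      (Matrix.fromCols 0 ((-(β₂⁻¹)) • (1 : Matrix (Fin m) (Fin m) ℝ))))
      *ᵥ pack α₁ α₂ α₃ β₁ β₂ A B Z dq dr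
    = Sum.elim (A *ᵥ uh + Bᵀ *ᵥ ph - dq) (B *ᵥ uh + Z *ᵥ ph - dr) := by
  have key : ∀ {a b : Type} [Fintype b] (c : ℝ) (hc : c ≠ 0) (N : Matrix a b ℝ) (v : b → ℝ),
      (c⁻¹ • N) *ᵥ (c • v) = N *ᵥ v := by
    intro a b _ c hc N v
    rw [Matrix.smul_mulVec, Matrix.mulVec_smul, smul_smul, inv_mul_cancel₀ hc, one_smul]
  rw [pack, Matrix.fromBlocks_mulVec]
  simp only [Sum.elim_comp_inl, Sum.elim_comp_inr]
  rw [Matrix.fromCols_mulVec_sumElim,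
    Matrix.fromCols_mulVec_sumElim, Matrix.fromCols_mulVec_sumElim,
    Matrix.fromCols_mulVec_sumElim, Matrix.fromCols_mulVec_sumElim,
    Matrix.fromCols_mulVec_sumElim]
  rw [key α₁ hα₁, key α₂ hα₂, key α₂ hα₂, key α₃ hα₃]
  rw [← Matrix.mulVec_mulVec (vecM A) (rowKronId uh) (Sig E), sig_mulVec_of_supp hA,
    rowKronId_mulVec]
  rw [← Matrix.mulVec_mulVec (vecM B) (idKronRow ph) (Sig F), sig_mulVec_of_supp hB,
    idKronRow_mulVec]
  rw [← Matrix.mulVec_mulVec (vecM B) (rowKronId uh) (Sig F), sig_mulVec_of_supp hB,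
    rowKronId_mulVec]
  have h3 : (rowKronId (b := m) ph * (JS m * Phi G * (DS m)⁻¹)) *ᵥ (fun p => dsv p * vecS Z p)
      = Z *ᵥ ph := by
    rw [← Matrix.mulVec_mulVec, ← Matrix.mulVec_mulVec, ← Matrix.mulVec_mulVec,
      DS_inv_mulVec, phi_mulVec_of_supp hZ, JS_mulVec_vecS hZs, rowKronId_mulVec]
  rw [h3]
  have hneg : ∀ {a : ℕ} (c : ℝ) (hc : c ≠ 0) (v : Fin a → ℝ),
      ((-(c⁻¹)) • (1 : Matrix (Fin a) (Fin a) ℝ)) *ᵥ (c • v) = -v := by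
    intro a c hc v
    rw [Matrix.smul_mulVec, Matrix.one_mulVec, smul_smul, neg_mul,
      inv_mul_cancel₀ hc, neg_smul, one_smul]
  rw [hneg β₁ hβ₁, hneg β₂ hβ₂]
  simp only [Matrix.zero_mulVec, Matrix.mulVec_zero, add_zero, zero_add]
  congr 1 <;> abel

lemma eunorm_pack (α₁ α₂ α₃ β₁ β₂ : ℝ)
    (A : Matrix (Fin n) (Fin n) ℝ) (B : Matrix (Fin m) (Fin n) ℝ)
    (Z : Matrix (Fin m) (Fin m) ℝ) (dq : Fin n → ℝ) (dr : Fin m → ℝ) (hZs : Z.IsSymm) :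
    eunorm (pack α₁ α₂ α₃ β₁ β₂ A B Z dq dr) = zeta1 α₁ α₂ α₃ β₁ β₂ A B Z dq dr := by
  rw [eunorm_eq_real, zeta1]
  congr 1
  rw [Fintype.sum_sum_type, Fintype.sum_sum_type, Fintype.sum_sum_type, Fintype.sum_sum_type]
  rw [frob_sq_real, frob_sq_real, frob_sq_real, eunorm_sq_real, eunorm_sq_real]
  have e1 : ∑ c : Fin n × Fin n, pack α₁ α₂ α₃ β₁ β₂ A B Z dq dr (Sum.inl (Sum.inl c)) ^ 2
      = α₁ ^ 2 * ∑ i, ∑ j, A i j ^ 2 := by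
    simp only [pack, Sum.elim_inl, Pi.smul_apply, smul_eq_mul, vecM, mul_pow]
    rw [← Finset.mul_sum, Fintype.sum_prod_type, Finset.sum_comm]
  have e2 : ∑ c : Fin n × Fin m, pack α₁ α₂ α₃ β₁ β₂ A B Z dq dr (Sum.inl (Sum.inr (Sum.inl c))) ^ 2
      = α₂ ^ 2 * ∑ i, ∑ j, B i j ^ 2 := by
    simp only [pack, Sum.elim_inl, Sum.elim_inr, Pi.smul_apply, smul_eq_mul, vecM, mul_pow]
    rw [← Finset.mul_sum, Fintype.sum_prod_type, Finset.sum_comm]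
  have e3 : ∑ p : SymIdx m, pack α₁ α₂ α₃ β₁ β₂ A B Z dq dr (Sum.inl (Sum.inr (Sum.inr p))) ^ 2
      = α₃ ^ 2 * ∑ i, ∑ j, Z i j ^ 2 := by
    simp only [pack, Sum.elim_inl, Sum.elim_inr, Pi.smul_apply, smul_eq_mul]
    have hp : ∀ p : SymIdx m, (α₃ * (dsv p * vecS Z p)) ^ 2
        = α₃ ^ 2 * (dsv p * Z p.1.1 p.1.2) ^ 2 := fun p => by rw [mul_pow]; rfl
    rw [Finset.sum_congr rfl (fun p _ => hp p), ← Finset.mul_sum, sum_symIdx_eq hZs]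
  have e4 : ∑ i : Fin n, pack α₁ α₂ α₃ β₁ β₂ A B Z dq dr (Sum.inr (Sum.inl i)) ^ 2
      = β₁ ^ 2 * ∑ i, dq i ^ 2 := by
    simp only [pack, Sum.elim_inl, Sum.elim_inr, Pi.smul_apply, smul_eq_mul, mul_pow]
    rw [← Finset.mul_sum]
  have e5 : ∑ i : Fin m, pack α₁ α₂ α₃ β₁ β₂ A B Z dq dr (Sum.inr (Sum.inr i)) ^ 2
      = β₂ ^ 2 * ∑ i, dr i ^ 2 := by
    simp only [pack, Sum.elim_inr, Pi.smul_apply, smul_eq_mul, mul_pow]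
    rw [← Finset.mul_sum]
  rw [e1, e2, e3, e4, e5]
  ring

end Main
section Final

theorem aux (n m : ℕ) (E : Matrix (Fin n) (Fin n) ℝ)
    (F : Matrix (Fin m) (Fin n) ℝ) (G : Matrix (Fin m) (Fin m) ℝ) (hG : G.IsSymm)
    (q : Fin n → ℝ) (r : Fin m → ℝ) (uh : Fin n → ℝ) (ph : Fin m → ℝ)
    (α₁ α₂ α₃ β₁ β₂ : ℝ)
    (hα₁ : 0 < α₁) (hα₂ : 0 < α₂) (hα₃ : 0 < α₃) (hβ₁ : 0 < β₁) (hβ₂ : 0 < β₂)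
    (Q : Fin n → ℝ) (hQ : Q = q - E *ᵥ uh - Fᵀ *ᵥ ph)
    (R : Fin m → ℝ) (hR : R = r - F *ᵥ uh - G *ᵥ ph)
    (S₁ : Matrix (Fin m × Fin m) (SymIdx m) ℝ) (hS₁ : S₁ = JS m * Phi G * (DS m)⁻¹)
    (K₁ : Matrix (Fin n) ((Fin n × Fin n) ⊕ ((Fin n × Fin m) ⊕ SymIdx m)) ℝ)
    (hK₁ : K₁ = Matrix.fromCols (α₁⁻¹ • (rowKronId (b := n) uh * Sig E))
        (Matrix.fromCols (α₂⁻¹ • (idKronRow (a := n) ph * Sig F)) 0))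
    (K₂ : Matrix (Fin m) ((Fin n × Fin n) ⊕ ((Fin n × Fin m) ⊕ SymIdx m)) ℝ)
    (hK₂ : K₂ = Matrix.fromCols 0
        (Matrix.fromCols (α₂⁻¹ • (rowKronId (b := m) uh * Sig F)) (α₃⁻¹ • (rowKronId (b := m) ph * S₁))))
    (I₁ : Matrix (Fin n) (Fin n ⊕ Fin m) ℝ)
    (hI₁ : I₁ = Matrix.fromCols ((-(β₁⁻¹)) • (1 : Matrix (Fin n) (Fin n) ℝ)) 0)
    (I₂ : Matrix (Fin m) (Fin n ⊕ Fin m) ℝ)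
    (hI₂ : I₂ = Matrix.fromCols 0 ((-(β₂⁻¹)) • (1 : Matrix (Fin m) (Fin m) ℝ)))
    (M : Matrix (Fin n ⊕ Fin m)
      (((Fin n × Fin n) ⊕ ((Fin n × Fin m) ⊕ SymIdx m)) ⊕ (Fin n ⊕ Fin m)) ℝ)
    (hM : M = Matrix.fromBlocks K₁ I₁ K₂ I₂)
    (w : Fin n ⊕ Fin m → ℝ) (hw : w = Sum.elim Q R) :
    IsUnit (M * Mᵀ) ∧
      IsLeast
        {t : ℝ | ∃ (ΔE : Matrix (Fin n) (Fin n) ℝ) (ΔF : Matrix (Fin m) (Fin n) ℝ)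
            (ΔG : Matrix (Fin m) (Fin m) ℝ) (Δq : Fin n → ℝ) (Δr : Fin m → ℝ),
            ΔG.IsSymm ∧
            (E + ΔE.hadamard (theta E)) *ᵥ uh + (F + ΔF.hadamard (theta F))ᵀ *ᵥ ph = q + Δq ∧
            (F + ΔF.hadamard (theta F)) *ᵥ uh + (G + ΔG.hadamard (theta G)) *ᵥ ph = r + Δr ∧
            t = zeta1 α₁ α₂ α₃ β₁ β₂ (ΔE.hadamard (theta E)) (ΔF.hadamard (theta F))
                  (ΔG.hadamard (theta G)) Δq Δr}
        (eunorm ((Mᵀ * (M * Mᵀ)⁻¹) *ᵥ w)) := by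
  classical
  -- the kernel of `Mᵀ` is trivial
  have hker : ∀ v : Fin n ⊕ Fin m → ℝ, Mᵀ *ᵥ v = 0 → v = 0 := by
    intro v hv
    funext k
    cases k with
    | inl i =>
      have h := congrFun hv (Sum.inr (Sum.inl i))
      simp only [Matrix.mulVec, dotProduct, Matrix.transpose_apply, Pi.zero_apply,
        hM, hI₁, hI₂, Fintype.sum_sum_type, Matrix.fromBlocks_apply₁₂,
        Matrix.fromBlocks_apply₂₂, Matrix.fromCols_apply_inl, Matrix.smul_apply,
        Matrix.one_apply, Matrix.zero_apply, smul_eq_mul, mul_ite, mul_one, mul_zero,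
        ite_mul, zero_mul, Finset.sum_ite_eq', Finset.mem_univ, if_true,
        Finset.sum_const_zero, add_zero, zero_add] at h
      have hb : -β₁⁻¹ ≠ 0 := by
        simp only [ne_eq, neg_eq_zero, inv_eq_zero]
        exact hβ₁.ne'
      rcases mul_eq_zero.mp h with h' | h'
      · exact absurd h' hb
      · exact h'
    | inr j =>
      have h := congrFun hv (Sum.inr (Sum.inr j))
      simp only [Matrix.mulVec, dotProduct, Matrix.transpose_apply, Pi.zero_apply,
        hM, hI₁, hI₂, Fintype.sum_sum_type, Matrix.fromBlocks_apply₁₂,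
        Matrix.fromBlocks_apply₂₂, Matrix.fromCols_apply_inr, Matrix.smul_apply,
        Matrix.one_apply, Matrix.zero_apply, smul_eq_mul, mul_ite, mul_one, mul_zero,
        ite_mul, zero_mul, Finset.sum_ite_eq', Finset.mem_univ, if_true,
        Finset.sum_const_zero, add_zero, zero_add] at h
      have hb : -β₂⁻¹ ≠ 0 := by
        simp only [ne_eq, neg_eq_zero, inv_eq_zero]
        exact hβ₂.ne'
      rcases mul_eq_zero.mp h with h' | h'
      · exact absurd h' hb
      · exact h'
  have hUnit : IsUnit (M * Mᵀ) := by
    rw [← Matrix.mulVec_injective_iff_isUnit]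
    intro v1 v2 h12
    have hsub : (M * Mᵀ) *ᵥ (v1 - v2) = 0 := by
      rw [Matrix.mulVec_sub, h12, sub_self]
    have h2 : (Mᵀ *ᵥ (v1 - v2)) ⬝ᵥ (Mᵀ *ᵥ (v1 - v2)) = 0 := by
      have hdp : (v1 - v2) ⬝ᵥ ((M * Mᵀ) *ᵥ (v1 - v2)) = 0 := by
        rw [hsub, dotProduct_zero]
      rw [← Matrix.mulVec_mulVec, Matrix.dotProduct_mulVec, ← Matrix.mulVec_transpose] at hdp
      exact hdp
    have h3 : Mᵀ *ᵥ (v1 - v2) = 0 := by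
      funext c
      rw [dotProduct] at h2
      have := (Finset.sum_eq_zero_iff_of_nonneg
        (fun k _ => mul_self_nonneg ((Mᵀ *ᵥ (v1 - v2)) k))).mp h2 c (Finset.mem_univ c)
      exact mul_self_eq_zero.mp this
    have := hker _ h3
    rwa [sub_eq_zero] at this
  refine ⟨hUnit, ?_, ?_⟩
  -- rearrangement helpers
  · -- membership: the optimum is attained
    obtain ⟨hsol, hmin⟩ := min_norm M hUnit w
    set y := (M * Mᵀ)⁻¹ *ᵥ w with hy
    set x := Mᵀ *ᵥ y with hxdef
    have hxw : (Mᵀ * (M * Mᵀ)⁻¹) *ᵥ w = x := by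
      rw [hxdef, hy, Matrix.mulVec_mulVec]
    have hcol : ∀ c, (∀ k, M k c = 0) → x c = 0 := by
      intro c hc
      rw [hxdef]
      simp only [Matrix.mulVec, dotProduct, Matrix.transpose_apply]
      exact Finset.sum_eq_zero fun k _ => by rw [hc k, zero_mul]
    have hxE : ∀ i j, E i j = 0 → x (Sum.inl (Sum.inl (j, i))) = 0 := by
      intro i j h
      apply hcol
      intro k
      cases k with
      | inl i' =>
        rw [hM, Matrix.fromBlocks_apply₁₁, hK₁, Matrix.fromCols_apply_inl,
          Matrix.smul_apply, Sig, Matrix.mul_diagonal]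
        simp [vecM, thetaR, h]
      | inr j' =>
        rw [hM, Matrix.fromBlocks_apply₂₁, hK₂, Matrix.fromCols_apply_inl]
        simp
    have hxF : ∀ i j, F i j = 0 → x (Sum.inl (Sum.inr (Sum.inl (j, i)))) = 0 := by
      intro i j h
      apply hcol
      intro k
      cases k with
      | inl i' =>
        rw [hM, Matrix.fromBlocks_apply₁₁, hK₁, Matrix.fromCols_apply_inr,
          Matrix.fromCols_apply_inl, Matrix.smul_apply, Sig, Matrix.mul_diagonal]
        simp [vecM, thetaR, h]
      | inr j' =>
        rw [hM, Matrix.fromBlocks_apply₂₁, hK₂, Matrix.fromCols_apply_inr,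
          Matrix.fromCols_apply_inl, Matrix.smul_apply, Sig, Matrix.mul_diagonal]
        simp [vecM, thetaR, h]
    have hxG : ∀ p : SymIdx m, G p.1.1 p.1.2 = 0 → x (Sum.inl (Sum.inr (Sum.inr p))) = 0 := by
      intro p h
      apply hcol
      intro k
      cases k with
      | inl i' =>
        rw [hM, Matrix.fromBlocks_apply₁₁, hK₁, Matrix.fromCols_apply_inr,
          Matrix.fromCols_apply_inr]
        simp
      | inr j' =>
        rw [hM, Matrix.fromBlocks_apply₂₁, hK₂, Matrix.fromCols_apply_inr,
          Matrix.fromCols_apply_inr, Matrix.smul_apply, hS₁, DS_inv, Phi,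
          Matrix.mul_apply]
        simp only [Matrix.mul_diagonal, vecS, thetaR, Matrix.of_apply, h, if_pos]
        simp
    -- unpack x into a perturbation tuple
    set A : Matrix (Fin n) (Fin n) ℝ :=
      Matrix.of fun i j => α₁⁻¹ * x (Sum.inl (Sum.inl (j, i))) with hAdef
    set B : Matrix (Fin m) (Fin n) ℝ :=
      Matrix.of fun i j => α₂⁻¹ * x (Sum.inl (Sum.inr (Sum.inl (j, i)))) with hBdef
    set Z : Matrix (Fin m) (Fin m) ℝ :=
      Matrix.of fun i j =>
        if h : j ≤ i then
          α₃⁻¹ * ((dsv (⟨(i, j), h⟩ : SymIdx m))⁻¹ * x (Sum.inl (Sum.inr (Sum.inr ⟨(i, j), h⟩))))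
        else
          α₃⁻¹ * ((dsv (⟨(j, i), le_of_not_ge h⟩ : SymIdx m))⁻¹ *
            x (Sum.inl (Sum.inr (Sum.inr ⟨(j, i), le_of_not_ge h⟩)))) with hZdef
    set dq : Fin n → ℝ := fun i => β₁⁻¹ * x (Sum.inr (Sum.inl i)) with hdqdef
    set dr : Fin m → ℝ := fun j => β₂⁻¹ * x (Sum.inr (Sum.inr j)) with hdrdef
    have hA : Supp E A := by
      intro i j h
      show α₁⁻¹ * x (Sum.inl (Sum.inl (j, i))) = 0
      rw [hxE i j h, mul_zero]
    have hB : Supp F B := by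
      intro i j h
      show α₂⁻¹ * x (Sum.inl (Sum.inr (Sum.inl (j, i)))) = 0
      rw [hxF i j h, mul_zero]
    have hZ : Supp G Z := by
      intro i j h
      show dite (j ≤ i) _ _ = 0
      by_cases h1 : j ≤ i
      · rw [dif_pos h1, hxG ⟨(i, j), h1⟩ h, mul_zero, mul_zero]
      · rw [dif_neg h1, hxG ⟨(j, i), le_of_not_ge h1⟩ (by rw [← hG.apply]; exact h),
          mul_zero, mul_zero]
    have hZsym : Z.IsSymm := by
      apply Matrix.IsSymm.ext
      intro i j
      show dite (i ≤ j) _ _ = dite (j ≤ i) _ _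
      by_cases h1 : j ≤ i
      · by_cases h2 : i ≤ j
        · have : i = j := le_antisymm h2 h1
          subst this
          rfl
        · rw [dif_neg h2, dif_pos h1]
      · have h2 : i ≤ j := le_of_not_ge h1
        rw [dif_pos h2, dif_neg h1]
    have hpack : pack α₁ α₂ α₃ β₁ β₂ A B Z dq dr = x := by
      funext c
      rcases c with (⟨j, i⟩ | (⟨j, i⟩ | p)) | (i | j)
      · show α₁ * (α₁⁻¹ * x _) = x _
        rw [← mul_assoc, mul_inv_cancel₀ hα₁.ne', one_mul]
      · show α₂ * (α₂⁻¹ * x _) = x _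
        rw [← mul_assoc, mul_inv_cancel₀ hα₂.ne', one_mul]
      · obtain ⟨⟨pi, pj⟩, hp⟩ := p
        show α₃ * (dsv ⟨(pi, pj), hp⟩ * Z pi pj) = x _
        have hzv : Z pi pj = α₃⁻¹ * ((dsv (⟨(pi, pj), hp⟩ : SymIdx m))⁻¹ *
            x (Sum.inl (Sum.inr (Sum.inr ⟨(pi, pj), hp⟩)))) := by
          show dite (pj ≤ pi) _ _ = _
          rw [dif_pos hp]
        rw [hzv]
        have e : α₃ * (dsv (⟨(pi, pj), hp⟩ : SymIdx m) *
            (α₃⁻¹ * ((dsv (⟨(pi, pj), hp⟩ : SymIdx m))⁻¹ *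
              x (Sum.inl (Sum.inr (Sum.inr ⟨(pi, pj), hp⟩)))))) =
            (α₃ * α₃⁻¹) * (dsv (⟨(pi, pj), hp⟩ : SymIdx m) *
              (dsv (⟨(pi, pj), hp⟩ : SymIdx m))⁻¹) *
              x (Sum.inl (Sum.inr (Sum.inr ⟨(pi, pj), hp⟩))) := by ring
        rw [e, mul_inv_cancel₀ hα₃.ne', mul_inv_cancel₀ (dsv_ne_zero _), one_mul, one_mul]
      · show β₁ * (β₁⁻¹ * x _) = x _
        rw [← mul_assoc, mul_inv_cancel₀ hβ₁.ne', one_mul]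
      · show β₂ * (β₂⁻¹ * x _) = x _
        rw [← mul_assoc, mul_inv_cancel₀ hβ₂.ne', one_mul]
    have hMx : M *ᵥ x = w := by rw [← hxw]; exact hsol
    have hfeq : Sum.elim (A *ᵥ uh + Bᵀ *ᵥ ph - dq) (B *ᵥ uh + Z *ᵥ ph - dr) = Sum.elim Q R := by
      rw [← hw, ← hMx, ← hpack, hM, hK₁, hK₂, hI₁, hI₂, hS₁]
      exact (M_mulVec_pack E F G uh ph α₁ α₂ α₃ β₁ β₂ hα₁.ne' hα₂.ne' hα₃.ne' hβ₁.ne' hβ₂.ne'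
        A B Z dq dr hA hB hZ hZsym).symm
    have e1 : A *ᵥ uh + Bᵀ *ᵥ ph - dq = Q := funext fun i => congrFun hfeq (Sum.inl i)
    have e2 : B *ᵥ uh + Z *ᵥ ph - dr = R := funext fun j => congrFun hfeq (Sum.inr j)
    refine ⟨A, B, Z, dq, dr, hZsym, ?_, ?_, ?_⟩
    · rw [hadamard_theta_of_supp hA, hadamard_theta_of_supp hB]
      funext i
      have h := congrFun e1 i
      rw [hQ] at h
      simp only [Matrix.add_mulVec, Matrix.transpose_add, Pi.add_apply, Pi.sub_apply] at h ⊢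
      linarith
    · rw [hadamard_theta_of_supp hB, hadamard_theta_of_supp hZ]
      funext j
      have h := congrFun e2 j
      rw [hR] at h
      simp only [Matrix.add_mulVec, Matrix.transpose_add, Pi.add_apply, Pi.sub_apply] at h ⊢
      linarith
    · rw [hadamard_theta_of_supp hA, hadamard_theta_of_supp hB, hadamard_theta_of_supp hZ,
        hxw, ← hpack, eunorm_pack α₁ α₂ α₃ β₁ β₂ A B Z dq dr hZsym]
  · -- lower bound
    obtain ⟨hsol, hmin⟩ := min_norm M hUnit w
    rintro t ⟨ΔE, ΔF, ΔG, Δq, Δr, hΔG, hfe1, hfe2, ht⟩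
    set A := ΔE.hadamard (theta E) with hAdef
    set B := ΔF.hadamard (theta F) with hBdef
    set Z := ΔG.hadamard (theta G) with hZdef
    have hA : Supp E A := hadamard_theta_supp E ΔE
    have hB : Supp F B := hadamard_theta_supp F ΔF
    have hZ : Supp G Z := hadamard_theta_supp G ΔG
    have hZsym : Z.IsSymm := by
      apply Matrix.IsSymm.ext
      intro i j
      rw [hZdef]
      show ΔG j i * theta G j i = ΔG i j * theta G i j
      rw [hΔG.apply i j]
      congr 1
      show (if G j i = 0 then (0:ℝ) else 1) = if G i j = 0 then 0 else 1
      rw [hG.apply i j]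
    have e1 : A *ᵥ uh + Bᵀ *ᵥ ph - Δq = Q := by
      rw [hQ]
      funext i
      have h := congrFun hfe1 i
      simp only [Matrix.add_mulVec, Matrix.transpose_add, Pi.add_apply, Pi.sub_apply] at h ⊢
      linarith
    have e2 : B *ᵥ uh + Z *ᵥ ph - Δr = R := by
      rw [hR]
      funext j
      have h := congrFun hfe2 j
      simp only [Matrix.add_mulVec, Matrix.transpose_add, Pi.add_apply, Pi.sub_apply] at h ⊢
      linarith
    have hx2 : M *ᵥ pack α₁ α₂ α₃ β₁ β₂ A B Z Δq Δr = w := by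
      rw [hM, hK₁, hK₂, hI₁, hI₂, hS₁,
        M_mulVec_pack E F G uh ph α₁ α₂ α₃ β₁ β₂ hα₁.ne' hα₂.ne' hα₃.ne' hβ₁.ne' hβ₂.ne'
          A B Z Δq Δr hA hB hZ hZsym, hw, e1, e2]
    calc eunorm ((Mᵀ * (M * Mᵀ)⁻¹) *ᵥ w) ≤ eunorm (pack α₁ α₂ α₃ β₁ β₂ A B Z Δq Δr) :=
        hmin _ hx2
      _ = zeta1 α₁ α₂ α₃ β₁ β₂ A B Z Δq Δr := eunorm_pack α₁ α₂ α₃ β₁ β₂ A B Z Δq Δr hZsym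
      _ = t := ht.symm

end Final

/-- Corollary 3.8: sparsity-preserving structured backward error for the real
GSPP with general `E`, `F`, symmetric `G`, and `H = F`. -/
theorem structured_BE_real_case_c
    (n m : ℕ) (E : Matrix (Fin n) (Fin n) ℝ)
    (F : Matrix (Fin m) (Fin n) ℝ) (G : Matrix (Fin m) (Fin m) ℝ) (hG : G.IsSymm)
    (q : Fin n → ℝ) (r : Fin m → ℝ) (uh : Fin n → ℝ) (ph : Fin m → ℝ)
    (α₁ α₂ α₃ β₁ β₂ : ℝ)
    (hα₁ : 0 < α₁) (hα₂ : 0 < α₂) (hα₃ : 0 < α₃) (hβ₁ : 0 < β₁) (hβ₂ : 0 < β₂) :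
    let Q : Fin n → ℝ := q - E *ᵥ uh - Fᵀ *ᵥ ph
    let R : Fin m → ℝ := r - F *ᵥ uh - G *ᵥ ph
    let S₁ := JS m * Phi G * (DS m)⁻¹
    let K₁ : Matrix (Fin n) ((Fin n × Fin n) ⊕ ((Fin n × Fin m) ⊕ SymIdx m)) ℝ :=
      fromCols (α₁⁻¹ • (rowKronId uh * Sig E))
        (fromCols (α₂⁻¹ • (idKronRow ph * Sig F)) 0)
    let K₂ : Matrix (Fin m) ((Fin n × Fin n) ⊕ ((Fin n × Fin m) ⊕ SymIdx m)) ℝ :=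
      fromCols 0
        (fromCols (α₂⁻¹ • (rowKronId uh * Sig F)) (α₃⁻¹ • (rowKronId ph * S₁)))
    let I₁ : Matrix (Fin n) (Fin n ⊕ Fin m) ℝ :=
      fromCols ((-(β₁⁻¹)) • (1 : Matrix (Fin n) (Fin n) ℝ)) 0
    let I₂ : Matrix (Fin m) (Fin n ⊕ Fin m) ℝ :=
      fromCols 0 ((-(β₂⁻¹)) • (1 : Matrix (Fin m) (Fin m) ℝ))
    let M := fromBlocks K₁ I₁ K₂ I₂
    let w : Fin n ⊕ Fin m → ℝ := Sum.elim Q R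
    IsUnit (M * Mᵀ) ∧
      IsLeast
        {t : ℝ | ∃ (ΔE : Matrix (Fin n) (Fin n) ℝ) (ΔF : Matrix (Fin m) (Fin n) ℝ)
            (ΔG : Matrix (Fin m) (Fin m) ℝ) (Δq : Fin n → ℝ) (Δr : Fin m → ℝ),
            ΔG.IsSymm ∧
            (E + ΔE.hadamard (theta E)) *ᵥ uh + (F + ΔF.hadamard (theta F))ᵀ *ᵥ ph = q + Δq ∧
            (F + ΔF.hadamard (theta F)) *ᵥ uh + (G + ΔG.hadamard (theta G)) *ᵥ ph = r + Δr ∧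
            t = zeta1 α₁ α₂ α₃ β₁ β₂ (ΔE.hadamard (theta E)) (ΔF.hadamard (theta F))
                  (ΔG.hadamard (theta G)) Δq Δr}
        (eunorm ((Mᵀ * (M * Mᵀ)⁻¹) *ᵥ w)) := by
  intro Q R S₁ K₁ K₂ I₁ I₂ M w
  exact aux n m E F G hG q r uh ph α₁ α₂ α₃ β₁ β₂ hα₁ hα₂ hα₃ hβ₁ hβ₂ Q rfl R rfl S₁ rfl
    K₁ rfl K₂ rfl I₁ rfl I₂ rfl M rfl w rfl

end GSPPBE
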